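/- Let (Ω, F, ℙ) be a probability space with a filtration (F_m)_{m ∈ ℕ}, and let (Δ_m)_{m ≥ 1} be a sequence of real random variables such that Δ_m is F_m-measurable and 0 ≤ Δ_m ≤ B almost surely for every m, where B ≥ 1 is a real constant. Then for every δ ∈ (0, 1), with probability at least 1 − δ, simultaneously for all M ≥ 1: Σ_{m=1}^M E[Δ_m | F_{m−1}] ≤ 2 · Σ_{m=1}^M Δ_m + 4B · log(1/δ) + 8B · log(4B) + 1, where log is the natural logarithm. -/

import Mathlib

open MeasureTheory

section VilleAux
open Finset
variable {Ω : Type*} {m0 : MeasurableSpace Ω}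

/-- Ville's inequality for nonnegative supermartingales. -/
lemma ville_ineq {μ : Measure Ω} [IsProbabilityMeasure μ]
    {F : Filtration ℕ m0} {Z : ℕ → Ω → ℝ} (hZ : Supermartingale Z F μ)
    (hpos : ∀ k ω, 0 ≤ Z k ω) {c : ℝ} (hc : 0 < c) :
    ENNReal.ofReal c * μ {ω | ∃ k, c ≤ Z k ω} ≤ ENNReal.ofReal (∫ ω, Z 0 ω ∂μ) := by
  have hmeasA : ∀ n : ℕ, MeasurableSet {ω | ∃ k ≤ n, c ≤ Z k ω} := by
    intro n
    have : {ω | ∃ k ≤ n, c ≤ Z k ω} = ⋃ k ≤ n, {ω | c ≤ Z k ω} := by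
      ext ω; simp
    rw [this]
    refine MeasurableSet.biUnion (Set.to_countable _) fun k _ => ?_
    exact measurableSet_le measurable_const
      (((hZ.1 k).mono (F.le k)).measurable)
  have hunion : {ω | ∃ k, c ≤ Z k ω} = ⋃ n : ℕ, {ω | ∃ k ≤ n, c ≤ Z k ω} := by
    ext ω
    constructor
    · rintro ⟨k, hk⟩; exact Set.mem_iUnion.2 ⟨k, k, le_rfl, hk⟩
    · rintro h
      obtain ⟨n, k, _, hk⟩ := Set.mem_iUnion.1 h
      exact ⟨k, hk⟩
  have hmono : Monotone fun n : ℕ => {ω | ∃ k ≤ n, c ≤ Z k ω} := by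
    intro a b hab ω ⟨k, hk, hck⟩
    exact ⟨k, hk.trans hab, hck⟩
  have key : ∀ n : ℕ, ENNReal.ofReal c * μ {ω | ∃ k ≤ n, c ≤ Z k ω} ≤
      ENNReal.ofReal (∫ ω, Z 0 ω ∂μ) := by
    intro n
    set A := {ω | ∃ k ≤ n, c ≤ Z k ω} with hA
    set τ := (fun ω => ((hittingBtwn Z (Set.Ici c) 0 n ω : ℕ) : WithTop ℕ)) with hτdef
    have hτ : IsStoppingTime F τ :=
      Adapted.isStoppingTime_hittingBtwn hZ.1.adapted measurableSet_Ici
    have hτ_le : ∀ ω, τ ω ≤ n := fun ω => WithTop.coe_le_coe.2 (hittingBtwn_le ω)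
    have hint : Integrable (stoppedValue Z τ) μ :=
      integrable_stoppedValue ℕ hτ hZ.integrable hτ_le
    have hge : ∀ ω ∈ A, c ≤ stoppedValue Z τ ω := by
      intro ω hω
      obtain ⟨k, hk, hck⟩ := hω
      have : stoppedValue Z τ ω ∈ Set.Ici c :=
        stoppedValue_hittingBtwn_mem ⟨k, ⟨Nat.zero_le _, hk⟩, hck⟩
      exact this
    have h1 : c * (μ A).toReal ≤ ∫ ω in A, stoppedValue Z τ ω ∂μ :=
      by
        have h := setIntegral_ge_of_const_le (hmeasA n) (measure_ne_top _ _) hge hint.integrableOn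
        rw [smul_eq_mul, mul_comm] at h
        exact h
    have h2 : ∫ ω in A, stoppedValue Z τ ω ∂μ ≤ ∫ ω, stoppedValue Z τ ω ∂μ := by
      refine setIntegral_le_integral hint ?_
      exact Filter.Eventually.of_forall fun ω => hpos _ _
    have h3 : ∫ ω, stoppedValue Z τ ω ∂μ ≤ ∫ ω, Z 0 ω ∂μ := by
      have := hZ.neg.expected_stoppedValue_mono (isStoppingTime_const F 0) hτ
        (fun ω => WithTop.coe_le_coe.2 (Nat.zero_le _)) hτ_le
      have hsv : stoppedValue (-Z) (fun _ => ((0:ℕ) : WithTop ℕ)) = -Z 0 := rfl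
      have hsv2 : stoppedValue (-Z) τ = -stoppedValue Z τ := rfl
      change ∫ x, (-Z 0) x ∂μ ≤ ∫ x, (-stoppedValue Z τ) x ∂μ at this
      simp only [Pi.neg_apply] at this
      rw [integral_neg, integral_neg, neg_le_neg_iff] at this
      exact this
    rw [ENNReal.le_ofReal_iff_toReal_le, ENNReal.toReal_mul, ENNReal.toReal_ofReal hc.le]
    · exact le_trans h1 (h2.trans h3)
    · exact ENNReal.mul_ne_top ENNReal.ofReal_ne_top (measure_ne_top _ _)
    · exact le_trans (mul_nonneg hc.le ENNReal.toReal_nonneg)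
        (le_trans h1 (h2.trans h3))
  rw [hunion]
  calc ENNReal.ofReal c * μ (⋃ n, {ω | ∃ k ≤ n, c ≤ Z k ω})
      = ⨆ n, ENNReal.ofReal c * μ {ω | ∃ k ≤ n, c ≤ Z k ω} := by
        rw [hmono.directed_le.measure_iUnion, ENNReal.mul_iSup]
    _ ≤ ENNReal.ofReal (∫ ω, Z 0 ω ∂μ) := iSup_le key

/-- The scalar inequality `exp (-t) ≤ 1 - t/2` on `[0,1]`. -/
lemma exp_neg_le_one_sub_half {t : ℝ} (h0 : 0 ≤ t) (h1 : t ≤ 1) :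
    Real.exp (-t) ≤ 1 - t / 2 := by
  have he : (1 : ℝ) + t ≤ Real.exp t := by linarith [Real.add_one_le_exp t]
  have hmul : Real.exp (-t) * Real.exp t = 1 := by
    rw [← Real.exp_add]; simp
  rw [← mul_le_mul_iff_left₀ (Real.exp_pos t), hmul]
  nlinarith [Real.exp_pos t]

end VilleAux

/-- Concentration of the sum of conditional means (cf. Kirschner & Krause, Lemma 3): for an
adapted sequence `Δ_m` with `0 ≤ Δ_m ≤ B` a.s. (`B ≥ 1`), with probability at least `1 − δ`,
simultaneously for all `M ≥ 1`,
`Σ_{m=1}^M E[Δ_m | F_{m−1}] ≤ 2 Σ_{m=1}^M Δ_m + 4B log(1/δ) + 8B log(4B) + 1`. -/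
theorem sum_condexp_le {Ω : Type*} {m0 : MeasurableSpace Ω}
    (μ : Measure Ω) [IsProbabilityMeasure μ]
    (F : Filtration ℕ m0)
    (Δ : ℕ → Ω → ℝ) (B : ℝ) (hB : 1 ≤ B)
    (hadapted : ∀ m, 1 ≤ m → StronglyMeasurable[F m] (Δ m))
    (hbdd : ∀ m, 1 ≤ m → ∀ᵐ ω ∂μ, 0 ≤ Δ m ω ∧ Δ m ω ≤ B)
    (δ : ℝ) (hδ : δ ∈ Set.Ioo (0 : ℝ) 1) :
    ENNReal.ofReal (1 - δ) ≤
      μ {ω | ∀ M : ℕ, 1 ≤ M →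
        ∑ m ∈ Finset.Icc 1 M, (μ[Δ m | F (m - 1)]) ω ≤
          2 * ∑ m ∈ Finset.Icc 1 M, Δ m ω
            + 4 * B * Real.log (1 / δ) + 8 * B * Real.log (4 * B) + 1} := by
  obtain ⟨hδ0, hδ1⟩ := hδ
  have hB0 : (0:ℝ) < B := lt_of_lt_of_le one_pos hB
  have h2B : (0:ℝ) < 2 * B := by linarith
  set c : ℝ := (2 * B)⁻¹ with hc_def
  have hc0 : 0 < c := inv_pos.2 h2B
  -- the exponential supermartingale
  set Z : ℕ → Ω → ℝ := fun M ω => Real.exp (c *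
    ((∑ m ∈ Finset.Icc 1 M, (μ[Δ m | F (m - 1)]) ω) -
      2 * ∑ m ∈ Finset.Icc 1 M, Δ m ω)) with hZ_def
  have hZpos : ∀ k ω, 0 < Z k ω := fun k ω => Real.exp_pos _
  -- integrability of Δ m and conditional expectation bounds
  have hΔint : ∀ m, 1 ≤ m → Integrable (Δ m) μ := by
    intro m hm
    refine ⟨((hadapted m hm).mono (F.le m)).aestronglyMeasurable,
      HasFiniteIntegral.of_bounded (C := B) ?_⟩
    filter_upwards [hbdd m hm] with ω h
    rw [Real.norm_eq_abs, abs_le]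
    exact ⟨by linarith [h.1], h.2⟩
  have hcond : ∀ m, 1 ≤ m → ∀ᵐ ω ∂μ,
      0 ≤ (μ[Δ m | F (m - 1)]) ω ∧ (μ[Δ m | F (m - 1)]) ω ≤ B := by
    intro m hm
    have h1 : (0:Ω→ℝ) ≤ᵐ[μ] μ[Δ m | F (m - 1)] :=
      condExp_nonneg (by filter_upwards [hbdd m hm] with ω h using h.1)
    have h2 : μ[Δ m | F (m - 1)] ≤ᵐ[μ] μ[(fun _ => B) | F (m - 1)] :=
      condExp_mono (hΔint m hm) (integrable_const B)
        (by filter_upwards [hbdd m hm] with ω h using h.2)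
    rw [condExp_const (F.le (m - 1))] at h2
    filter_upwards [h1, h2] with ω e1 e2
    exact ⟨e1, e2⟩
  -- good event
  have hgood : ∀ᵐ ω ∂μ, ∀ m, 1 ≤ m → (0 ≤ Δ m ω ∧ Δ m ω ≤ B) ∧
      (0 ≤ (μ[Δ m | F (m - 1)]) ω ∧ (μ[Δ m | F (m - 1)]) ω ≤ B) := by
    rw [MeasureTheory.ae_all_iff]
    intro m
    by_cases hm : 1 ≤ m
    · filter_upwards [hbdd m hm, hcond m hm] with ω e1 e2
      exact fun _ => ⟨e1, e2⟩
    · exact Filter.Eventually.of_forall fun ω h => absurd h hm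
  -- a.e. bound on Z M
  have hZbdd : ∀ M : ℕ, ∀ᵐ ω ∂μ, Z M ω ≤ Real.exp ((M : ℝ) / 2) := by
    intro M
    filter_upwards [hgood] with ω h
    have hU : (∑ m ∈ Finset.Icc 1 M, (μ[Δ m | F (m - 1)]) ω) ≤ M * B := by
      calc (∑ m ∈ Finset.Icc 1 M, (μ[Δ m | F (m - 1)]) ω)
          ≤ ∑ m ∈ Finset.Icc 1 M, B := by
            refine Finset.sum_le_sum fun m hm => ?_
            exact ((h m (Finset.mem_Icc.1 hm).1).2).2
        _ = M * B := by
            rw [Finset.sum_const, Nat.card_Icc]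
            simp [nsmul_eq_mul]
    have hS : 0 ≤ ∑ m ∈ Finset.Icc 1 M, Δ m ω := by
      refine Finset.sum_nonneg fun m hm => ?_
      exact ((h m (Finset.mem_Icc.1 hm).1).1).1
    rw [hZ_def]
    apply Real.exp_le_exp.2
    have hcB : c * B = 1 / 2 := by
      rw [hc_def]; field_simp
    calc c * ((∑ m ∈ Finset.Icc 1 M, (μ[Δ m | F (m - 1)]) ω) -
          2 * ∑ m ∈ Finset.Icc 1 M, Δ m ω)
        ≤ c * (M * B) := by
          apply mul_le_mul_of_nonneg_left _ hc0.le
          linarith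
      _ = (M : ℝ) / 2 := by
          rw [mul_comm (M:ℝ) B, ← mul_assoc, hcB]; ring
  -- measurability of Z M
  have hZmeas : ∀ M, StronglyMeasurable[F M] (Z M) := by
    intro M
    have hsum1 : StronglyMeasurable[F M]
        (fun ω => ∑ m ∈ Finset.Icc 1 M, (μ[Δ m | F (m - 1)]) ω) :=
      Finset.stronglyMeasurable_fun_sum _ fun m hm => stronglyMeasurable_condExp.mono
        (F.mono (le_trans (Nat.sub_le m 1) (Finset.mem_Icc.1 hm).2))
    have hsum2 : StronglyMeasurable[F M]
        (fun ω => ∑ m ∈ Finset.Icc 1 M, Δ m ω) :=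
      Finset.stronglyMeasurable_fun_sum _ fun m hm =>
        (hadapted m (Finset.mem_Icc.1 hm).1).mono (F.mono (Finset.mem_Icc.1 hm).2)
    exact Real.continuous_exp.comp_stronglyMeasurable
      (((hsum1.sub (hsum2.const_mul 2)).const_mul c))
  have hZint : ∀ M, Integrable (Z M) μ := by
    intro M
    refine ⟨((hZmeas M).mono (F.le M)).aestronglyMeasurable,
      HasFiniteIntegral.of_bounded (C := Real.exp ((M : ℝ) / 2)) ?_⟩
    filter_upwards [hZbdd M] with ω h
    rw [Real.norm_eq_abs, abs_of_pos (hZpos M ω)]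
    exact h
  -- one-step supermartingale property
  have hstep : ∀ M : ℕ, μ[Z (M + 1) | F M] ≤ᵐ[μ] Z M := by
    intro M
    set g : Ω → ℝ := fun ω => Z M ω * Real.exp (c * (μ[Δ (M + 1) | F M]) ω) with hg_def
    set h : Ω → ℝ := fun ω => Real.exp (c * (-2 * Δ (M + 1) ω)) with hh_def
    have hM1 : 1 ≤ M + 1 := Nat.le_add_left 1 M
    have hidx : (M + 1) - 1 = M := by omega
    have hsplit : Z (M + 1) = g * h := by
      funext ω
      rw [hZ_def, hg_def, hh_def]
      simp only [Pi.mul_apply]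
      rw [Finset.sum_Icc_succ_top hM1, Finset.sum_Icc_succ_top hM1, hidx,
        ← Real.exp_add, ← Real.exp_add]
      congr 1
      ring
    have hgmeas : StronglyMeasurable[F M] g := by
      rw [hg_def]
      exact (hZmeas M).mul (Real.continuous_exp.comp_stronglyMeasurable
        (stronglyMeasurable_condExp.const_mul c))
    have hhint : Integrable h μ := by
      refine ⟨(Real.continuous_exp.comp_stronglyMeasurable
        ((((hadapted (M+1) hM1).mono (F.le (M+1))).const_mul (-2)).const_mul c)).aestronglyMeasurable,
        HasFiniteIntegral.of_bounded (C := 1) ?_⟩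
      filter_upwards [hbdd (M+1) hM1] with ω hω
      rw [hh_def, Real.norm_eq_abs, abs_of_pos (Real.exp_pos _), ← Real.exp_zero]
      apply Real.exp_le_exp.2
      nlinarith [hω.1, hc0.le]
    have hghint : Integrable (g * h) μ := hsplit ▸ hZint (M + 1)
    have hpull : μ[g * h | F M] =ᵐ[μ] g * μ[h | F M] :=
      condExp_mul_of_stronglyMeasurable_left hgmeas hghint hhint
    -- bound the conditional expectation of h
    have hlin : Integrable (fun ω => 1 - c * Δ (M + 1) ω) μ :=
      (integrable_const 1).sub ((hΔint (M+1) hM1).const_mul c)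
    have hcmono : μ[h | F M] ≤ᵐ[μ] μ[(fun ω => 1 - c * Δ (M + 1) ω) | F M] := by
      refine condExp_mono hhint hlin ?_
      filter_upwards [hbdd (M+1) hM1] with ω hω
      show Real.exp (c * (-2 * Δ (M + 1) ω)) ≤ 1 - c * Δ (M + 1) ω
      have ht0 : 0 ≤ Δ (M + 1) ω / B := div_nonneg hω.1 hB0.le
      have ht1 : Δ (M + 1) ω / B ≤ 1 := (div_le_one hB0).2 hω.2
      have := exp_neg_le_one_sub_half ht0 ht1
      have heq : c * (-2 * Δ (M + 1) ω) = -(Δ (M + 1) ω / B) := by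
        rw [hc_def]; field_simp
      rw [heq]
      have heq2 : c * Δ (M + 1) ω = Δ (M + 1) ω / B / 2 := by
        rw [hc_def, div_div]
        rw [div_eq_inv_mul, mul_comm B 2]
      rw [heq2]
      linarith
    have hclin : μ[(fun ω => 1 - c * Δ (M + 1) ω) | F M]
        =ᵐ[μ] fun ω => 1 - c * (μ[Δ (M + 1) | F M]) ω := by
      have h1 : (fun ω => 1 - c * Δ (M + 1) ω) =
          (fun _ => (1:ℝ)) - c • Δ (M + 1) := by
        funext ω; simp [smul_eq_mul]
      rw [h1]
      refine (condExp_sub (integrable_const 1) ((hΔint (M+1) hM1).smul c) _).trans ?_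
      have h2 := condExp_smul (μ := μ) (m := F M) c (Δ (M + 1))
      rw [condExp_const (F.le M)]
      filter_upwards [h2] with ω hω
      simp only [Pi.sub_apply, Pi.smul_apply, smul_eq_mul] at *
      rw [hω]
    rw [hsplit]
    refine hpull.trans_le ?_
    have : g * μ[h | F M] ≤ᵐ[μ] Z M := by
      filter_upwards [hcmono, hclin] with ω h1 h2
      simp only [Pi.mul_apply]
      have hg0 : 0 ≤ g ω := by
        rw [hg_def]
        exact mul_nonneg (hZpos M ω).le (Real.exp_pos _).le
      have step1 : g ω * (μ[h | F M]) ω ≤ g ω * (1 - c * (μ[Δ (M + 1) | F M]) ω) := by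
        apply mul_le_mul_of_nonneg_left _ hg0
        rw [← h2]; exact h1
      refine step1.trans ?_
      set y := c * (μ[Δ (M + 1) | F M]) ω with hy
      have hek : Real.exp y * (1 - y) ≤ 1 := by
        have h3 : 1 - y ≤ Real.exp (-y) := by linarith [Real.add_one_le_exp (-y)]
        calc Real.exp y * (1 - y) ≤ Real.exp y * Real.exp (-y) :=
              mul_le_mul_of_nonneg_left h3 (Real.exp_pos y).le
          _ = 1 := by rw [← Real.exp_add]; simp
      calc g ω * (1 - y) = Z M ω * (Real.exp y * (1 - y)) := by rw [hg_def]; ring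
        _ ≤ Z M ω * 1 := mul_le_mul_of_nonneg_left hek (hZpos M ω).le
        _ = Z M ω := mul_one _
    exact this
  have hZsuper : Supermartingale Z F μ :=
    supermartingale_nat (fun M => hZmeas M) hZint hstep
  -- integral of Z 0 is 1
  have hZ0 : ∫ ω, Z 0 ω ∂μ = 1 := by
    have : Z 0 = fun _ => 1 := by
      funext ω
      simp only [hZ_def]
      rw [Finset.Icc_eq_empty (by norm_num)]
      simp
    rw [this]
    simp
  -- apply Ville
  have hville := ville_ineq hZsuper (fun k ω => (hZpos k ω).le)
    (c := 1/δ) (by positivity)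
  rw [hZ0, ENNReal.ofReal_one] at hville
  set bad := {ω | ∃ k, 1/δ ≤ Z k ω} with hbad_def
  have hbadmeas : MeasurableSet bad := by
    rw [hbad_def, Set.setOf_exists]
    exact MeasurableSet.iUnion fun k =>
      measurableSet_le measurable_const (((hZmeas k).mono (F.le k)).measurable)
  have hbadle : μ bad ≤ ENNReal.ofReal δ := by
    have hne : ENNReal.ofReal (1/δ) ≠ 0 := by
      simp [ENNReal.ofReal_eq_zero]
      positivity
    have hnetop : ENNReal.ofReal (1/δ) ≠ ⊤ := ENNReal.ofReal_ne_top
    calc μ bad = (ENNReal.ofReal (1/δ))⁻¹ * (ENNReal.ofReal (1/δ) * μ bad) := by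
          rw [← mul_assoc, ENNReal.inv_mul_cancel hne hnetop, one_mul]
      _ ≤ (ENNReal.ofReal (1/δ))⁻¹ * 1 := mul_le_mul_right hville _
      _ = ENNReal.ofReal δ := by
          rw [mul_one, one_div, ENNReal.ofReal_inv_of_pos hδ0, inv_inv]
  -- complement of bad is contained in the target set
  have hsubset : badᶜ ⊆ {ω | ∀ M : ℕ, 1 ≤ M →
      ∑ m ∈ Finset.Icc 1 M, (μ[Δ m | F (m - 1)]) ω ≤
        2 * ∑ m ∈ Finset.Icc 1 M, Δ m ω
          + 4 * B * Real.log (1 / δ) + 8 * B * Real.log (4 * B) + 1} := by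
    intro ω hω M hM
    have hZM : Z M ω < 1/δ := by
      by_contra hcon
      exact hω ⟨M, le_of_not_gt hcon⟩
    rw [hZ_def] at hZM
    have hlog : c * ((∑ m ∈ Finset.Icc 1 M, (μ[Δ m | F (m - 1)]) ω) -
        2 * ∑ m ∈ Finset.Icc 1 M, Δ m ω) < Real.log (1/δ) :=
      (Real.lt_log_iff_exp_lt (by positivity)).2 hZM
    have hL : 0 < Real.log (1/δ) := Real.log_pos (by rw [lt_div_iff₀ hδ0]; linarith)
    have hlog4B : 0 ≤ Real.log (4 * B) := Real.log_nonneg (by linarith)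
    have hmain : (∑ m ∈ Finset.Icc 1 M, (μ[Δ m | F (m - 1)]) ω) -
        2 * ∑ m ∈ Finset.Icc 1 M, Δ m ω < 2 * B * Real.log (1/δ) := by
      have h2 := mul_lt_mul_of_pos_left hlog h2B
      rw [hc_def] at h2
      rw [mul_inv_cancel_left₀ (ne_of_gt h2B)] at h2
      exact h2
    nlinarith [mul_pos hB0 hL, mul_nonneg hB0.le hlog4B]
  calc ENNReal.ofReal (1 - δ) = 1 - ENNReal.ofReal δ := by
        rw [ENNReal.ofReal_sub 1 hδ0.le, ENNReal.ofReal_one]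
    _ ≤ 1 - μ bad := tsub_le_tsub_left hbadle 1
    _ = μ badᶜ := (prob_compl_eq_one_sub hbadmeas).symm
    _ ≤ _ := measure_mono hsubset
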